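/- Fix real numbers 0 < T* ≤ T, ε > 0 and κ > 0. Let G : [0,T] → ℝ be continuous with 0 ≤ G(t) ≤ κ for all t ∈ [0,T] and G(0) = 1. Let Γ : ℝ → ℝ be continuous and nondecreasing, constant on (−∞, 0] with Γ(0) = 0, let μ_Γ be its Lebesgue–Stieltjes measure, and assume Γ(T*) > 1 + ε. For c > 0 define V_c(t) := ((G(t) + c)/(1 + c)) · exp( ∫_{(0,t]} (G(s) + c)^{−1} dμ_Γ(s) ). Then V_c(0) = 1 and V_c(t) > 0 for all t ∈ [0,T] and all c > 0, and there exists c > 0 (depending only on T*, ε, κ) such that V_c(t) > 1 for every t ∈ [T*, T]. (This is the content of Theorem 4.7, multiplicatively generated strong relative arbitrage, where V_c is the value process of the strategy multiplicatively generated by G^{(c)} = (G + c)/(1 + c).) -/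

import Mathlib

open MeasureTheory

/-- Theorem 4.7 (multiplicatively generated strong relative arbitrage):
`V_c` is the value process of the strategy multiplicatively generated by
`G^{(c)} = (G + c)/(1 + c)`, where `μΓ` is the Lebesgue–Stieltjes measure of
the nondecreasing continuous Gamma functional `Γ`. -/
theorem multiplicatively_generated_strong_relative_arbitrage
    (T Tstar ε κ : ℝ) (hTstar : 0 < Tstar) (hTstarT : Tstar ≤ T)
    (hε : 0 < ε) (hκ : 0 < κ)
    (G : ℝ → ℝ) (hGcont : ContinuousOn G (Set.Icc (0:ℝ) T))
    (hGbdd : ∀ t ∈ Set.Icc (0:ℝ) T, G t ∈ Set.Icc (0:ℝ) κ)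
    (hG0 : G 0 = 1)
    (Γ : ℝ → ℝ) (hΓcont : Continuous Γ) (hΓmono : Monotone Γ)
    (hΓconst : ∀ t : ℝ, t ≤ 0 → Γ t = 0)
    (μΓ : Measure ℝ)
    (hμΓ : ∀ a b : ℝ, a ≤ b → μΓ (Set.Ioc a b) = ENNReal.ofReal (Γ b - Γ a))
    (hΓTstar : Γ Tstar > 1 + ε)
    (V : ℝ → ℝ → ℝ)
    (hV : ∀ c t, V c t =
      ((G t + c) / (1 + c)) *
        Real.exp (∫ s in Set.Ioc (0:ℝ) t, (G s + c)⁻¹ ∂μΓ)) :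
    (∀ c > (0:ℝ), V c 0 = 1 ∧ ∀ t ∈ Set.Icc (0:ℝ) T, 0 < V c t) ∧
      ∃ c > (0:ℝ), ∀ t ∈ Set.Icc Tstar T, 1 < V c t := by
  constructor
  · intro c hc
    constructor
    · rw [hV, Set.Ioc_self, Measure.restrict_empty, integral_zero_measure,
        Real.exp_zero, hG0]
      field_simp
    · intro t ht
      rw [hV]
      have h1 := (hGbdd t ht).1
      positivity
  · refine ⟨κ / ε + 1, by positivity, ?_⟩
    intro t ht
    set c := κ / ε + 1 with hcdef
    have hc0 : 0 < c := by positivity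
    have hκc : 0 < κ + c := by linarith
    have htT : t ∈ Set.Icc (0:ℝ) T := ⟨le_trans hTstar.le ht.1, ht.2⟩
    have hsub : Set.Ioc (0:ℝ) t ⊆ Set.Icc (0:ℝ) T :=
      fun s hs => ⟨hs.1.le, hs.2.trans htT.2⟩
    have hμfin : μΓ (Set.Ioc (0:ℝ) t) ≠ ⊤ := by
      rw [hμΓ 0 t htT.1]; exact ENNReal.ofReal_ne_top
    haveI : IsFiniteMeasure (μΓ.restrict (Set.Ioc (0:ℝ) t)) :=
      ⟨by rwa [Measure.restrict_apply_univ, lt_top_iff_ne_top]⟩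
    have hGpos : ∀ s ∈ Set.Ioc (0:ℝ) t, 0 < G s + c := by
      intro s hs
      have := (hGbdd s (hsub hs)).1
      linarith
    have hcontinv : ContinuousOn (fun s => (G s + c)⁻¹) (Set.Ioc (0:ℝ) t) :=
      ((hGcont.mono hsub).add continuousOn_const).inv₀
        (fun s hs => (hGpos s hs).ne')
    have hmeas : AEStronglyMeasurable (fun s => (G s + c)⁻¹)
        (μΓ.restrict (Set.Ioc (0:ℝ) t)) :=
      (hcontinv.aemeasurable measurableSet_Ioc).aestronglyMeasurable
    have hint : Integrable (fun s => (G s + c)⁻¹)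
        (μΓ.restrict (Set.Ioc (0:ℝ) t)) := by
      refine Integrable.mono' (integrable_const c⁻¹) hmeas ?_
      filter_upwards [ae_restrict_mem measurableSet_Ioc] with s hs
      have h1 := hGpos s hs
      have h2 := (hGbdd s (hsub hs)).1
      rw [Real.norm_eq_abs, abs_of_pos (by positivity)]
      apply inv_anti₀ hc0
      linarith
    have hΓt : (1 + ε) ≤ Γ t := le_trans hΓTstar.le (hΓmono ht.1)
    have hμtoReal : (μΓ (Set.Ioc (0:ℝ) t)).toReal = Γ t := by
      rw [hμΓ 0 t htT.1, hΓconst 0 le_rfl, sub_zero,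
        ENNReal.toReal_ofReal (by linarith)]
    have hlow : (κ + c)⁻¹ * Γ t ≤ ∫ s in Set.Ioc (0:ℝ) t, (G s + c)⁻¹ ∂μΓ := by
      have hmono := setIntegral_mono_on (integrable_const ((κ + c)⁻¹)) hint
        measurableSet_Ioc (fun s hs => by
          have h2 := (hGbdd s (hsub hs)).2
          exact inv_anti₀ (hGpos s hs) (by linarith))
      rwa [setIntegral_const, measureReal_def, hμtoReal, smul_eq_mul, mul_comm] at hmono
    rw [hV]
    have hGt := (hGbdd t htT).1
    have hcε : c * ε = κ + ε := by
      rw [hcdef]; field_simp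
    have hinvκc : (κ + c) * (κ + c)⁻¹ = 1 := mul_inv_cancel₀ hκc.ne'
    have hinvpos : 0 < (κ + c)⁻¹ := inv_pos.mpr hκc
    have key : 1 < c / (1 + c) * (1 + (κ + c)⁻¹ * (1 + ε)) := by
      have h5 : c * ε * (κ + c)⁻¹ = (κ + ε) * (κ + c)⁻¹ := by rw [hcε]
      rw [div_mul_eq_mul_div, lt_div_iff₀ (by positivity)]
      nlinarith [hinvκc, h5, mul_pos hε hinvpos]
    have hexpchain : 1 + (κ + c)⁻¹ * (1 + ε) ≤
        Real.exp (∫ s in Set.Ioc (0:ℝ) t, (G s + c)⁻¹ ∂μΓ) := by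
      have h3 : 1 + (κ + c)⁻¹ * (1 + ε) ≤ 1 + (κ + c)⁻¹ * Γ t := by
        have := mul_le_mul_of_nonneg_left hΓt hinvpos.le
        linarith
      have h4 : 1 + (κ + c)⁻¹ * Γ t ≤ Real.exp ((κ + c)⁻¹ * Γ t) := by
        have := Real.add_one_le_exp ((κ + c)⁻¹ * Γ t)
        linarith
      exact le_trans h3 (le_trans h4 (Real.exp_le_exp.mpr hlow))
    calc (1:ℝ) < c / (1 + c) * (1 + (κ + c)⁻¹ * (1 + ε)) := key
      _ ≤ (G t + c) / (1 + c) *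
          Real.exp (∫ s in Set.Ioc (0:ℝ) t, (G s + c)⁻¹ ∂μΓ) := by
        apply mul_le_mul
        · exact (div_le_div_iff_of_pos_right (by positivity)).mpr (by linarith)
        · exact hexpchain
        · positivity
        · positivity
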